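/- Let Y ~ N(μ, σ²), U Bernoulli(1/2) independent of Y, and X = arctan(Y²) + Uπ. Then the conditional expectation of Y given X equals E(Y|X) = tanh((μ/σ²)√(tan X)) · √(tan X) almost surely. -/

import Mathlib

open MeasureTheory ProbabilityTheory
open scoped NNReal ENNReal

/-- Density of the Gaussian distribution `N(m, s²)`. -/
noncomputable def gpdf (m s y : ℝ) : ℝ :=
  (1 / (s * Real.sqrt (2 * Real.pi))) * Real.exp (-(y - m) ^ 2 / (2 * s ^ 2))

lemma aux_abs_tanh_le_one (t : ℝ) : |Real.tanh t| ≤ 1 := by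
  rw [Real.tanh_eq_sinh_div_cosh, abs_div, abs_of_pos (Real.cosh_pos t),
    div_le_one (Real.cosh_pos t), Real.sinh_eq, Real.cosh_eq, abs_le]
  constructor <;> nlinarith [Real.exp_pos t, Real.exp_pos (-t)]

lemma aux_measurable_tan : Measurable Real.tan := by
  have h : Real.tan = fun x => Real.sin x / Real.cos x := funext fun x => Real.tan_eq_sin_div_cos x
  rw [h]; exact Real.measurable_sin.div Real.measurable_cos

lemma aux_measurable_tanh : Measurable Real.tanh := by
  have h : Real.tanh = fun x => Real.sinh x / Real.cosh x :=
    funext fun x => Real.tanh_eq_sinh_div_cosh x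
  rw [h]; exact Real.measurable_sinh.div Real.measurable_cosh

/-- the conditional expectation as a function of `X`. -/
noncomputable def auxg (c x : ℝ) : ℝ :=
  Real.tanh (c * Real.sqrt (Real.tan x)) * Real.sqrt (Real.tan x)

lemma aux_measurable_g (c : ℝ) : Measurable (auxg c) := by
  have hsq : Measurable fun x => Real.sqrt (Real.tan x) :=
    Real.continuous_sqrt.measurable.comp aux_measurable_tan
  exact (aux_measurable_tanh.comp (measurable_const.mul hsq)).mul hsq

lemma aux_keyA (c u : ℝ) (hu : u ∈ ({0,1} : Set ℝ)) (y : ℝ) :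
    auxg c (Real.arctan (y^2) + u * Real.pi) = Real.tanh (c*y) * y := by
  simp only [Set.mem_insert_iff, Set.mem_singleton_iff] at hu
  have htan : Real.tan (Real.arctan (y^2) + u * Real.pi) = y^2 := by
    rcases hu with rfl | rfl
    · simp [Real.tan_arctan]
    · rw [one_mul, Real.tan_add_pi, Real.tan_arctan]
  unfold auxg
  rw [htan, Real.sqrt_sq_eq_abs]
  rcases abs_cases y with ⟨h1, _⟩ | ⟨h1, _⟩
  · rw [h1]
  · rw [h1, show c * -y = -(c*y) by ring, Real.tanh_neg]; ring

lemma aux_integrable_dirac (f : ℝ → ℝ) (a : ℝ) : Integrable f (Measure.dirac a) := by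
  have h : f =ᵐ[Measure.dirac a] fun _ => f a := by
    rw [Filter.EventuallyEq, MeasureTheory.ae_dirac_eq]
    simp
  exact (integrable_const (f a)).congr h.symm

lemma aux_int_gauss_pdf_mul (m : ℝ) (v : ℝ≥0) (hv : 0 < (v:ℝ)) :
    Integrable (fun x => x * gaussianPDFReal m v x) := by
  have hb : 0 < (2*(v:ℝ))⁻¹ := by positivity
  have h1 : Integrable (fun x : ℝ => x * Real.exp (-((2*(v:ℝ))⁻¹) * x^2)) := by
    have := integrable_rpow_mul_exp_neg_mul_sq hb (s := 1) (by norm_num)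
    simpa [Real.rpow_one] using this
  have h1' := h1.comp_sub_right m
  have h2 := (integrable_exp_neg_mul_sq hb).comp_sub_right m
  set C : ℝ := (Real.sqrt (2 * Real.pi * (v:ℝ)))⁻¹ with hC
  have hC0 : 0 ≤ C := by positivity
  have hE : ∀ x : ℝ, Real.exp (-(x - m)^2 / (2*(v:ℝ))) = Real.exp (-((2*(v:ℝ))⁻¹) * (x-m)^2) := by
    intro x; congr 1; field_simp
  refine ((h1'.norm.const_mul C).add (h2.const_mul (C * |m|))).mono'
    ((measurable_id.mul (measurable_gaussianPDFReal m v)).aestronglyMeasurable) ?_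
  filter_upwards with x
  have hpdf : gaussianPDFReal m v x = C * Real.exp (-((2*(v:ℝ))⁻¹) * (x-m)^2) := by
    rw [gaussianPDFReal, ← hE]
  have habs : |x| ≤ |x - m| + |m| := by
    calc |x| = |(x - m) + m| := by ring_nf
    _ ≤ |x - m| + |m| := abs_add_le _ _
  have hexp0 : (0:ℝ) < Real.exp (-((2*(v:ℝ))⁻¹) * (x-m)^2) := Real.exp_pos _
  simp only [Pi.add_apply, Real.norm_eq_abs, abs_mul, abs_of_pos hexp0, abs_of_nonneg hC0,
    abs_of_nonneg (gaussianPDFReal_nonneg m v x), hpdf]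
  nlinarith [mul_le_mul_of_nonneg_right habs (mul_nonneg hC0 hexp0.le)]

lemma aux_integrable_id_gauss (m : ℝ) (v : ℝ≥0) (hv : 0 < (v:ℝ)) :
    Integrable (fun x : ℝ => x) (gaussianReal m v) := by
  have hvne : v ≠ 0 := by
    intro h; rw [h] at hv; simp at hv
  rw [gaussianReal_of_var_ne_zero m hvne,
    integrable_withDensity_iff (measurable_gaussianPDF m v)
      (ae_of_all _ fun x => ENNReal.ofReal_lt_top)]
  refine (aux_int_gauss_pdf_mul m v hv).congr ?_
  filter_upwards with x
  simp [gaussianPDF, ENNReal.toReal_ofReal (gaussianPDFReal_nonneg m v x)]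

lemma aux_integral_gauss (m : ℝ) (v : ℝ≥0) (hv : v ≠ 0) (f : ℝ → ℝ) :
    ∫ x, f x ∂(gaussianReal m v) = ∫ x, gaussianPDFReal m v x * f x := by
  rw [gaussianReal_of_var_ne_zero m hv]
  have h : gaussianPDF m v = fun x => ((gaussianPDFReal m v x).toNNReal : ℝ≥0∞) := rfl
  have hmeas : Measurable (fun x => (gaussianPDFReal m v x).toNNReal) :=
    measurable_real_toNNReal.comp (measurable_gaussianPDFReal m v)
  rw [h, integral_withDensity_eq_integral_smul hmeas f]
  congr 1 with x
  simp [NNReal.smul_def, Real.coe_toNNReal _ (gaussianPDFReal_nonneg m v x)]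

lemma aux_key_odd (m σ : ℝ) (hσ : 0 < σ) (y : ℝ) :
    gaussianPDFReal m ⟨σ^2, sq_nonneg σ⟩ (-y) * (Real.tanh (m/σ^2 * -y) * -y - -y)
      = -(gaussianPDFReal m ⟨σ^2, sq_nonneg σ⟩ y * (Real.tanh (m/σ^2 * y) * y - y)) := by
  have hσ2 : (σ:ℝ)^2 ≠ 0 := pow_ne_zero 2 hσ.ne'
  set t := m/σ^2 * y with ht
  have hc : Real.cosh t ≠ 0 := (Real.cosh_pos t).ne'
  have h1 : Real.tanh t - 1 = -Real.exp (-t) / Real.cosh t := by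
    rw [Real.tanh_eq_sinh_div_cosh, div_sub_one hc, ← neg_sub (Real.cosh t), Real.cosh_sub_sinh,
      neg_div]
  have h2 : Real.tanh (-t) - 1 = -Real.exp t / Real.cosh t := by
    have h3 : Real.tanh t + 1 = Real.exp t / Real.cosh t := by
      rw [Real.tanh_eq_sinh_div_cosh, div_add_one hc, add_comm, Real.cosh_add_sinh]
    rw [Real.tanh_neg, neg_div]
    linarith
  have hmn : m/σ^2 * -y = -t := by rw [ht]; ring
  have hpdfv : ∀ x : ℝ, gaussianPDFReal m ⟨σ^2, sq_nonneg σ⟩ x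
      = (Real.sqrt (2 * Real.pi * σ^2))⁻¹ * Real.exp (-(x - m)^2 / (2*σ^2)) := fun x => rfl
  have hexp : Real.exp (-(-y - m)^2 / (2*σ^2)) * Real.exp t
      = Real.exp (-(y - m)^2 / (2*σ^2)) * Real.exp (-t) := by
    rw [← Real.exp_add, ← Real.exp_add]
    congr 1
    rw [ht]
    field_simp
    ring
  rw [hmn, hpdfv, hpdfv]
  have e1 : Real.tanh t * y - y = y * (Real.tanh t - 1) := by ring
  have e2 : Real.tanh (-t) * -y - -y = -y * (Real.tanh (-t) - 1) := by ring
  rw [e1, e2, h1, h2]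
  have hcosh := Real.cosh_pos t
  field_simp
  simp only [neg_div] at hexp
  linear_combination y * hexp

/-- The integrand as a function of `(U, Y)`. -/
noncomputable def auxD (c : ℝ) (A : Set ℝ) (p : ℝ × ℝ) : ℝ :=
  A.indicator (fun _ => (1:ℝ)) (Real.arctan (p.2^2) + p.1 * Real.pi) *
    (auxg c (Real.arctan (p.2^2) + p.1 * Real.pi) - p.2)

lemma aux_measurable_D (c : ℝ) {A : Set ℝ} (hA : MeasurableSet A) : Measurable (auxD c A) := by
  have hq : Measurable fun p : ℝ × ℝ => Real.arctan (p.2^2) + p.1 * Real.pi :=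
    (Real.measurable_arctan.comp ((measurable_snd).pow_const 2)).add
      (measurable_fst.mul_const _)
  exact ((measurable_const.indicator hA).comp hq).mul
    (((aux_measurable_g c).comp hq).sub measurable_snd)

/-- With `Y ~ N(m, σ²)`, `U ~ Bernoulli(1/2)` independent of `Y`, and
`X = arctan(Y²) + Uπ`: `E(Y|X) = tanh((m/σ²)√(tan X))·√(tan X)` a.s. -/
theorem condexp_eq_tanh_sqrt_tan {Ω : Type*} [MeasurableSpace Ω] (μ : Measure Ω)
    [IsProbabilityMeasure μ] (Y U : Ω → ℝ) (m σ : ℝ) (hσ : 0 < σ)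
    (hYm : Measurable Y) (hUm : Measurable U)
    (hY : μ.map Y = gaussianReal m ⟨σ ^ 2, sq_nonneg σ⟩)
    (hU : μ.map U = (1/2 : ℝ≥0∞) • Measure.dirac (0 : ℝ) + (1/2 : ℝ≥0∞) • Measure.dirac 1)
    (hindep : IndepFun U Y μ)
    (X : Ω → ℝ) (hX : X = fun ω => Real.arctan ((Y ω) ^ 2) + U ω * Real.pi) :
    μ[Y | MeasurableSpace.comap X inferInstance]
      =ᵐ[μ] fun ω =>
        Real.tanh ((m / σ ^ 2) * Real.sqrt (Real.tan (X ω))) * Real.sqrt (Real.tan (X ω)) := by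
  have hσ2 : (σ:ℝ)^2 ≠ 0 := pow_ne_zero 2 hσ.ne'
  set v : ℝ≥0 := (⟨σ^2, sq_nonneg σ⟩ : ℝ≥0) with hvdef
  have hvr : (v : ℝ) = σ^2 := rfl
  have hvpos : 0 < (v : ℝ) := by rw [hvr]; positivity
  have hvne : v ≠ 0 := by
    intro h
    rw [h] at hvpos
    simp at hvpos
  set c : ℝ := m / σ^2 with hcdef
  -- measurability of X
  have hXm : Measurable X := by
    rw [hX]
    exact (Real.measurable_arctan.comp (hYm.pow_const 2)).add (hUm.mul_const _)
  have hm : MeasurableSpace.comap X inferInstance ≤ ‹MeasurableSpace Ω› := hXm.comap_le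
  haveI : IsFiniteMeasure (μ.trim hm) := by
    constructor
    rw [MeasureTheory.trim_measurableSet_eq hm
      (@MeasurableSet.univ Ω (MeasurableSpace.comap X inferInstance))]
    exact measure_lt_top μ _
  -- integrability of Y
  have hYint : Integrable Y μ := by
    have h0 : Integrable (fun x : ℝ => x) (μ.map Y) := by
      rw [hY]; exact aux_integrable_id_gauss m v hvpos
    have := (integrable_map_measure aestronglyMeasurable_id hYm.aemeasurable).mp h0
    simpa [Function.comp] using this
  -- U ∈ {0, 1} a.e.
  have hS : MeasurableSet ({0, 1} : Set ℝ) := (measurableSet_singleton 1).insert 0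
  have hU01 : ∀ᵐ ω ∂μ, U ω ∈ ({0, 1} : Set ℝ) := by
    have h0 : μ (U ⁻¹' ({0, 1} : Set ℝ)ᶜ) = 0 := by
      rw [← Measure.map_apply hUm hS.compl, hU]
      simp [Measure.dirac_apply' _ hS.compl, Set.indicator_apply]
    rw [ae_iff]
    convert h0 using 2
    ext ω; simp
  -- pointwise identification of the candidate a.e.
  have hae : ∀ᵐ ω ∂μ, auxg c (X ω) = Real.tanh (c * Y ω) * Y ω := by
    filter_upwards [hU01] with ω hω
    rw [hX]
    exact aux_keyA c (U ω) hω (Y ω)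
  -- integrability of the candidate
  have hgXint : Integrable (fun ω => auxg c (X ω)) μ := by
    refine hYint.abs.mono' (((aux_measurable_g c).comp hXm).aestronglyMeasurable) ?_
    filter_upwards [hae] with ω hω
    rw [hω, Real.norm_eq_abs, abs_mul]
    calc |Real.tanh (c * Y ω)| * |Y ω| ≤ 1 * |Y ω| :=
          mul_le_mul_of_nonneg_right (aux_abs_tanh_le_one _) (abs_nonneg _)
    _ = |Y ω| := one_mul _
  -- main set-integral identity
  have heq : ∀ s : Set Ω, MeasurableSet[MeasurableSpace.comap X inferInstance] s →
      μ s < ⊤ → ∫ ω in s, auxg c (X ω) ∂μ = ∫ ω in s, Y ω ∂μ := by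
    rintro s ⟨A, hA, rfl⟩ -
    have hsm : MeasurableSet (X ⁻¹' A) := hXm hA
    rw [← sub_eq_zero, ← integral_sub hgXint.integrableOn hYint.integrableOn,
      ← integral_indicator hsm]
    have hfun : (X ⁻¹' A).indicator (fun ω => auxg c (X ω) - Y ω)
        = fun ω => auxD c A (U ω, Y ω) := by
      funext ω
      have hXω : Real.arctan ((Y ω)^2) + U ω * Real.pi = X ω := by rw [hX]
      have hD : auxD c A (U ω, Y ω)
          = A.indicator (fun _ => (1:ℝ)) (X ω) * (auxg c (X ω) - Y ω) := by
        simp only [auxD, hXω]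
      rw [hD]
      by_cases h : X ω ∈ A
      · rw [Set.indicator_of_mem (show ω ∈ X ⁻¹' A from h), Set.indicator_of_mem h, one_mul]
      · rw [Set.indicator_of_notMem (show ω ∉ X ⁻¹' A from h),
          Set.indicator_of_notMem h, zero_mul]
    rw [hfun]
    have hDm : Measurable (auxD c A) := aux_measurable_D c hA
    have hpair : Measurable fun ω => (U ω, Y ω) := hUm.prodMk hYm
    have hmap : μ.map (fun ω => (U ω, Y ω)) = (μ.map U).prod (μ.map Y) :=
      (indepFun_iff_map_prod_eq_prod_map_map hUm.aemeasurable hYm.aemeasurable).mp hindep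
    have hDint_mu : Integrable (fun ω => auxD c A (U ω, Y ω)) μ := by
      rw [← hfun]
      exact (hgXint.sub hYint).indicator hsm
    have h1 : ∫ ω, auxD c A (U ω, Y ω) ∂μ = ∫ p, auxD c A p ∂((μ.map U).prod (μ.map Y)) := by
      rw [← hmap]
      exact (integral_map hpair.aemeasurable hDm.aestronglyMeasurable).symm
    rw [h1, hU, hY]
    have hDint_prod : Integrable (auxD c A)
        ((((1:ℝ≥0∞)/2) • Measure.dirac (0:ℝ) + ((1:ℝ≥0∞)/2) • Measure.dirac (1:ℝ)).prod
          (gaussianReal m v)) := by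
      rw [← hU, ← hY, ← hmap]
      exact (integrable_map_measure hDm.aestronglyMeasurable hpair.aemeasurable).mpr hDint_mu
    rw [integral_prod _ hDint_prod]
    have hinner : ∀ u ∈ ({0, 1} : Set ℝ), ∫ y, auxD c A (u, y) ∂(gaussianReal m v) = 0 := by
      intro u hu
      have hval : ∀ y : ℝ, auxD c A (u, y)
          = A.indicator (fun _ => (1:ℝ)) (Real.arctan (y^2) + u * Real.pi) *
            (Real.tanh (c * y) * y - y) := by
        intro y
        unfold auxD
        rw [aux_keyA c u hu y]
      rw [aux_integral_gauss m v hvne]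
      set w : ℝ → ℝ := fun y => gaussianPDFReal m v y * auxD c A (u, y) with hw
      have hodd : ∀ y, w (-y) = - w y := by
        intro y
        simp only [hw, hval, neg_sq]
        have key := aux_key_odd m σ hσ y
        rw [hcdef]
        set e := A.indicator (fun _ => (1:ℝ)) (Real.arctan (y^2) + u * Real.pi)
        linear_combination e * key
      have h3 := MeasureTheory.integral_neg_eq_self w (volume : Measure ℝ)
      have h4 : (∫ y : ℝ, w (-y)) = - ∫ y : ℝ, w y := by
        simp_rw [hodd]
        exact integral_neg w
      have : (∫ y : ℝ, w y) = 0 := by linarith [h3, h4]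
      exact this
    rw [integral_add_measure
        ((aux_integrable_dirac _ 0).smul_measure (by simp))
        ((aux_integrable_dirac _ 1).smul_measure (by simp)),
      integral_smul_measure, integral_smul_measure, integral_dirac, integral_dirac,
      hinner 0 (by simp), hinner 1 (by simp)]
    simp
  have hgsm : AEStronglyMeasurable[MeasurableSpace.comap X inferInstance]
      (fun ω => auxg c (X ω)) μ := by
    have hXc : Measurable[MeasurableSpace.comap X inferInstance] X :=
      Measurable.of_comap_le le_rfl
    exact (((aux_measurable_g c).comp hXc).stronglyMeasurable).aestronglyMeasurable
  exact (ae_eq_condExp_of_forall_setIntegral_eq hm hYint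
    (fun s _ _ => hgXint.integrableOn) heq hgsm).symm
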